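/- Let M ≥ 2 be an integer and define f : [0, 2/M] → ℝ by f(x) = sin(πMx/2)/sin(πx/2) for x ∈ (0, 2/M] and f(0) = M. Then f is continuous on [0, 2/M], strictly decreasing on [0, 2/M], and f(2/M) = 0. -/

import Mathlib

lemma Ueval1 : ∀ n : ℤ, (Polynomial.Chebyshev.U ℝ n).eval 1 = n + 1 := by
  intro n
  induction n using Polynomial.Chebyshev.induct with
  | zero => simp
  | one => simp [Polynomial.Chebyshev.U_one]; norm_num
  | add_two n ih1 ih2 =>
      rw [Polynomial.Chebyshev.U_add_two]
      push_cast at *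
      simp only [Polynomial.eval_sub, Polynomial.eval_mul, Polynomial.eval_X,
        Polynomial.eval_ofNat] at *
      linarith
  | neg_add_one n ih1 ih2 =>
      rw [Polynomial.Chebyshev.U_sub_one]
      push_cast at *
      simp only [Polynomial.eval_sub, Polynomial.eval_mul, Polynomial.eval_X,
        Polynomial.eval_ofNat] at *
      linarith

lemma hder_sin (k x : ℝ) : HasDerivAt (fun y => Real.sin (k * y / 2)) (k / 2 * Real.cos (k * x / 2)) x := by
  have h1 : HasDerivAt (fun y : ℝ => k * y / 2) (k / 2) x := by
    simpa using ((hasDerivAt_id x).const_mul k).div_const 2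
  simpa [mul_comm] using h1.sin

lemma hder_cos (k x : ℝ) : HasDerivAt (fun y => Real.cos (k * y / 2)) (-(k / 2 * Real.sin (k * x / 2))) x := by
  have h1 : HasDerivAt (fun y : ℝ => k * y / 2) (k / 2) x := by
    simpa using ((hasDerivAt_id x).const_mul k).div_const 2
  have := h1.cos
  convert this using 1
  ring

/-- The IRS beamforming-gain function `f(x) = sin(πMx/2)/sin(πx/2)` on `(0, 2/M]`,
with `f(0) = M`, is continuous on `[0, 2/M]`, strictly decreasing there, and `f(2/M) = 0`. -/
theorem stmt_1 (M : ℕ) (hM : 2 ≤ M) (f : ℝ → ℝ)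
    (hf : ∀ x ∈ Set.Ioc (0 : ℝ) (2 / (M : ℝ)),
      f x = Real.sin (Real.pi * (M : ℝ) * x / 2) / Real.sin (Real.pi * x / 2))
    (hf0 : f 0 = (M : ℝ)) :
    ContinuousOn f (Set.Icc 0 (2 / (M : ℝ))) ∧
    StrictAntiOn f (Set.Icc 0 (2 / (M : ℝ))) ∧
    f (2 / (M : ℝ)) = 0 := by
  have hπ := Real.pi_pos
  have hM2 : (2:ℝ) ≤ (M:ℝ) := by exact_mod_cast hM
  have hM0 : (0:ℝ) < (M:ℝ) := by linarith
  set c : ℝ := 2 / (M:ℝ) with hcdef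
  have hc0 : 0 < c := by positivity
  have hc1 : c ≤ 1 := by rw [hcdef, div_le_one hM0]; linarith
  have hMc : (M:ℝ) * c = 2 := by rw [hcdef]; field_simp
  -- positivity of sines
  have hsinb : ∀ x : ℝ, 0 < x → x ≤ 1 → 0 < Real.sin (Real.pi * x / 2) := by
    intro x hx hx1
    apply Real.sin_pos_of_pos_of_lt_pi (by positivity)
    nlinarith
  have hsina : ∀ x : ℝ, 0 < x → x < c → 0 < Real.sin (Real.pi * (M:ℝ) * x / 2) := by
    intro x hx hxc
    apply Real.sin_pos_of_pos_of_lt_pi (by positivity)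
    have : (M:ℝ) * x < 2 := by
      calc (M:ℝ) * x < (M:ℝ) * c := by exact mul_lt_mul_of_pos_left hxc hM0
      _ = 2 := hMc
    nlinarith
  -- the polynomial extension F
  set F : ℝ → ℝ := fun x => (Polynomial.Chebyshev.U ℝ ((M:ℤ)-1)).eval (Real.cos (Real.pi * x / 2)) with hFdef
  have hFQ : ∀ x : ℝ, F x * Real.sin (Real.pi * x / 2) = Real.sin (Real.pi * (M:ℝ) * x / 2) := by
    intro x
    have h := Polynomial.Chebyshev.U_real_cos (Real.pi * x / 2) ((M:ℤ)-1)
    have h2 : (((M:ℤ)-1 : ℤ):ℝ) + 1 = (M:ℝ) := by push_cast; ring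
    rw [hFdef]
    simp only []
    rw [h, h2]
    ring_nf
  have hFcont : Continuous F := by
    apply (Polynomial.continuous _).comp
    exact Real.continuous_cos.comp (by continuity)
  have heq : Set.EqOn f F (Set.Icc 0 c) := by
    intro x hx
    rcases eq_or_lt_of_le hx.1 with h0 | h0
    · rw [← h0, hf0, hFdef]
      simp only []
      norm_num [Ueval1]
    · have hxm : x ∈ Set.Ioc 0 c := ⟨h0, hx.2⟩
      rw [hf x hxm]
      have hs := (hsinb x h0 (le_trans hx.2 hc1)).ne'
      rw [div_eq_iff hs]
      exact (hFQ x).symm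
  -- the auxiliary function g (numerator of the derivative)
  set g : ℝ → ℝ := fun y => Real.pi * (M:ℝ) / 2 * Real.cos (Real.pi * (M:ℝ) * y / 2) * Real.sin (Real.pi * y / 2)
      - Real.sin (Real.pi * (M:ℝ) * y / 2) * (Real.pi / 2 * Real.cos (Real.pi * y / 2)) with hgdef
  have hgder : ∀ x : ℝ, HasDerivAt g
      (((Real.pi/2)^2 - (Real.pi*(M:ℝ)/2)^2) * (Real.sin (Real.pi * (M:ℝ) * x / 2) * Real.sin (Real.pi * x / 2))) x := by
    intro x
    have h := (((hder_cos (Real.pi * (M:ℝ)) x).const_mul (Real.pi * (M:ℝ) / 2)).mul (hder_sin Real.pi x)).sub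
      ((hder_sin (Real.pi * (M:ℝ)) x).mul ((hder_cos Real.pi x).const_mul (Real.pi / 2)))
    exact h.congr_deriv (by ring)
  have hganti : ∀ x : ℝ, 0 < x → x < c → g x < 0 := by
    intro x hx hxc
    have hstrict : StrictAntiOn g (Set.Icc 0 c) := by
      apply strictAntiOn_of_deriv_neg (convex_Icc 0 c)
      · have : Continuous g := by rw [hgdef]; fun_prop
        exact this.continuousOn
      · intro y hy
        rw [interior_Icc] at hy
        rw [(hgder y).deriv]
        have h1 := hsina y hy.1 hy.2
        have h2 := hsinb y hy.1 (le_of_lt (lt_of_lt_of_le hy.2 hc1))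
        have h3 : (Real.pi/2)^2 - (Real.pi*(M:ℝ)/2)^2 < 0 := by
          nlinarith [mul_pos hπ hπ, sq_nonneg ((M:ℝ) - 2), hM2, hM0]
        exact mul_neg_of_neg_of_pos h3 (mul_pos h1 h2)
    have hg0 : g 0 = 0 := by
      rw [hgdef]; simp
    have := hstrict (Set.left_mem_Icc.mpr (le_of_lt hc0)) ⟨le_of_lt hx, le_of_lt hxc⟩ hx
    rw [hg0] at this
    linarith
  -- derivative of F is negative on the interior
  have hFderiv : ∀ x ∈ Set.Ioo (0:ℝ) c, deriv F x < 0 := by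
    intro x hx
    have hx1 : x < 1 := lt_of_lt_of_le hx.2 hc1
    have hsb := hsinb x hx.1 (le_of_lt hx1)
    have hQ : HasDerivAt (fun y => Real.sin (Real.pi * (M:ℝ) * y / 2) / Real.sin (Real.pi * y / 2))
        ((Real.pi * (M:ℝ) / 2 * Real.cos (Real.pi * (M:ℝ) * x / 2) * Real.sin (Real.pi * x / 2)
          - Real.sin (Real.pi * (M:ℝ) * x / 2) * (Real.pi / 2 * Real.cos (Real.pi * x / 2)))
          / (Real.sin (Real.pi * x / 2))^2) x := by
      exact (hder_sin (Real.pi * (M:ℝ)) x).div (hder_sin Real.pi x) hsb.ne'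
    have hev : F =ᶠ[nhds x] (fun y => Real.sin (Real.pi * (M:ℝ) * y / 2) / Real.sin (Real.pi * y / 2)) := by
      have hmem : Set.Ioo (0:ℝ) 1 ∈ nhds x := Ioo_mem_nhds hx.1 hx1
      apply Filter.eventuallyEq_of_mem hmem
      intro y hy
      have hs := (hsinb y hy.1 (le_of_lt hy.2)).ne'
      rw [eq_div_iff hs]
      exact hFQ y
    have : deriv F x = deriv (fun y => Real.sin (Real.pi * (M:ℝ) * y / 2) / Real.sin (Real.pi * y / 2)) x :=
      Filter.EventuallyEq.deriv_eq hev
    rw [this, hQ.deriv]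
    apply div_neg_of_neg_of_pos
    · exact hganti x hx.1 hx.2
    · positivity
  have hFanti : StrictAntiOn F (Set.Icc 0 c) := by
    apply strictAntiOn_of_deriv_neg (convex_Icc 0 c) hFcont.continuousOn
    rw [interior_Icc]
    exact hFderiv
  refine ⟨hFcont.continuousOn.congr heq, ?_, ?_⟩
  · intro x hx y hy hxy
    rw [heq hx, heq hy]
    exact hFanti hx hy hxy
  · have hcm : c ∈ Set.Ioc 0 c := ⟨hc0, le_refl c⟩
    rw [hf c hcm]
    have : Real.pi * (M:ℝ) * c / 2 = Real.pi := by
      rw [hcdef]; field_simp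
    rw [this, Real.sin_pi, zero_div]
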